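/- In 𝒜_{r,s}(n), for any increasing index sequences 1 ≤ i_1 < ⋯ < i_t ≤ n and 1 ≤ j_1 < ⋯ < j_t ≤ n, the quantum row-minor equals the quantum column-minor: rdet_r(A^{i_1…i_t}_{j_1…j_t}) = cdet_{s⁻¹}(A^{i_1…i_t}_{j_1…j_t}). -/

import Mathlib

open scoped TensorProduct Classical

noncomputable section Prelude

variable {F : Type*} [Field F] {R : Type*} [Ring R] [Algebra F R]

/-- The number of inversions `l(σ)` of a permutation `σ ∈ S_n`. -/
def inversions {n : ℕ} (σ : Equiv.Perm (Fin n)) : ℕ :=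
  (Finset.univ.filter fun p : Fin n × Fin n => p.1 < p.2 ∧ σ p.2 < σ p.1).card

/-- The quantum row determinant `rdet_r(A) = Σ_σ (-r)^{l(σ)} a_{1σ(1)} ⋯ a_{nσ(n)}`. -/
def rdet (r : F) {n : ℕ} (a : Fin n → Fin n → R) : R :=
  ∑ σ : Equiv.Perm (Fin n), (-r) ^ inversions σ • (List.ofFn fun i => a i (σ i)).prod

/-- The quantum column determinant `cdet_{s⁻¹}(A) = Σ_σ (-s)^{-l(σ)} a_{σ(1)1} ⋯ a_{σ(n)n}`. -/
def cdet (s : F) {n : ℕ} (a : Fin n → Fin n → R) : R :=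
  ∑ σ : Equiv.Perm (Fin n),
    ((-s) ^ (-(inversions σ : ℤ))) • (List.ofFn fun i => a (σ i) i).prod

/-- The quantum (column) permanent `per_q(A) = Σ_σ q^{l(σ)} a_{σ(1)1} ⋯ a_{σ(n)n}`. -/
def qper (q : F) {n : ℕ} (a : Fin n → Fin n → R) : R :=
  ∑ σ : Equiv.Perm (Fin n), q ^ inversions σ • (List.ofFn fun i => a (σ i) i).prod

/-- The defining relations of the two-parameter quantum semigroup `𝒜_{r,s}(n)`:
`a` plays the role of the matrix of generators `(a_{ij})`. -/
def IsQSemigroup (r s : F) {n : ℕ} (a : Fin n → Fin n → R) : Prop :=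
  (∀ i k l : Fin n, k < l → a i k * a i l = r • (a i l * a i k)) ∧
  (∀ i j k : Fin n, i < j → a i k * a j k = s⁻¹ • (a j k * a i k)) ∧
  (∀ i j k l : Fin n, i < j → k < l → r • (a i l * a j k) = s⁻¹ • (a j k * a i l)) ∧
  (∀ i j k l : Fin n, i < j → k < l →
    a i k * a j l - a j l * a i k = (r - s) • (a i l * a j k))

/-- The quantum integer `[m]_v = 1 + v + ⋯ + v^{m-1}`. -/
def qint (v : F) (m : ℕ) : F := ∑ k ∈ Finset.range m, v ^ k

/-- The quantum factorial `[n]_v! = [n]_v [n-1]_v ⋯ [1]_v`. -/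
def qfac (v : F) (n : ℕ) : F := ∏ m ∈ Finset.range n, qint v (m + 1)

/-- The position `2i-1` (1-based), i.e. `2i` (0-based), in `Fin (2n)`. -/
def pL {n : ℕ} (i : Fin n) : Fin (2 * n) := ⟨2 * i.1, by have := i.2; omega⟩

/-- The position `2i` (1-based), i.e. `2i+1` (0-based), in `Fin (2n)`. -/
def pR {n : ℕ} (i : Fin n) : Fin (2 * n) := ⟨2 * i.1 + 1, by have := i.2; omega⟩

/-- The product `b_{σ(1)σ(2)} b_{σ(3)σ(4)} ⋯ b_{σ(2n-1)σ(2n)}`. -/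
def pairProd {n : ℕ} (b : Fin (2 * n) → Fin (2 * n) → R) (σ : Equiv.Perm (Fin (2 * n))) : R :=
  (List.ofFn fun i : Fin n => b (σ (pL i)) (σ (pR i))).prod

/-- Membership in `Π′`: `σ(2i-1) < σ(2i)` for all `i = 1, …, n`. -/
def inPi' {n : ℕ} (σ : Equiv.Perm (Fin (2 * n))) : Prop := ∀ i : Fin n, σ (pL i) < σ (pR i)

/-- Membership in `Π`: additionally `σ(1) < σ(3) < ⋯ < σ(2n-1)`. -/
def inPi {n : ℕ} (σ : Equiv.Perm (Fin (2 * n))) : Prop :=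
  inPi' σ ∧ ∀ i j : Fin n, i < j → σ (pL i) < σ (pL j)

/-- `Σ_{σ∈Π′} (-r)^{l(σ)} b_{σ(1)σ(2)} ⋯ b_{σ(2n-1)σ(2n)}`. -/
def pfSum (r : F) {n : ℕ} (b : Fin (2 * n) → Fin (2 * n) → R) : R :=
  ∑ σ : Equiv.Perm (Fin (2 * n)), if inPi' σ then (-r) ^ inversions σ • pairProd b σ else 0

/-- The quantum Pfaffian `Pf_r(B)`. -/
def Pf (r : F) {n : ℕ} (b : Fin (2 * n) → Fin (2 * n) → R) : R :=
  (qfac (r ^ 4) n)⁻¹ • pfSum r b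

/-- `Σ_{σ∈Π′} (-s)^{-l(σ)} b_{σ(1)σ(2)} ⋯ b_{σ(2n-1)σ(2n)}`. -/
def pfSumInv (s : F) {n : ℕ} (b : Fin (2 * n) → Fin (2 * n) → R) : R :=
  ∑ σ : Equiv.Perm (Fin (2 * n)),
    if inPi' σ then ((-s) ^ (-(inversions σ : ℤ))) • pairProd b σ else 0

/-- The quantum Pfaffian with parameter `s⁻¹`, `Pf_{s⁻¹}(B)`. -/
def PfInv (s : F) {n : ℕ} (b : Fin (2 * n) → Fin (2 * n) → R) : R :=
  (qfac (s⁻¹ ^ 4) n)⁻¹ • pfSumInv s b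

/-- `Σ_{σ∈Π′} q^{l(σ)} b_{σ(1)σ(2)} ⋯ b_{σ(2n-1)σ(2n)}`. -/
def hfSum (q : F) {n : ℕ} (b : Fin (2 * n) → Fin (2 * n) → R) : R :=
  ∑ σ : Equiv.Perm (Fin (2 * n)), if inPi' σ then q ^ inversions σ • pairProd b σ else 0

/-- The quantum Hafnian `Hf_q(B)`. -/
def Hf (q : F) {n : ℕ} (b : Fin (2 * n) → Fin (2 * n) → R) : R :=
  (qfac (q ^ 4) n)⁻¹ • hfSum q b

/-- The `q`-Maya (`q`-Plücker) relations. -/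
def MayaRels (q : F) {n : ℕ} (b : Fin (2 * n) → Fin (2 * n) → R) : Prop :=
  ∀ i j k l : Fin (2 * n), i < j → j < k → k < l →
    b i j * b k l - q • (b i k * b j l) + q ^ 2 • (b i l * b j k) =
      b k l * b i j - q⁻¹ • (b j l * b i k) + q⁻¹ ^ 2 • (b j k * b i l)

/-- The `(−q)`-Maya relations. -/
def NegMayaRels (q : F) {n : ℕ} (b : Fin (2 * n) → Fin (2 * n) → R) : Prop :=
  ∀ i j k l : Fin (2 * n), i < j → j < k → k < l →
    b i j * b k l + q • (b i k * b j l) + q ^ 2 • (b i l * b j k) =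
      b k l * b i j + q⁻¹ • (b j l * b i k) + q⁻¹ ^ 2 • (b j k * b i l)

end Prelude


section Aux
variable {F : Type*} [Field F] {R : Type*} [Ring R] [Algebra F R]

lemma swap_adj_lt {t k : ℕ} (hk : k + 1 < t) {p q : Fin t} (hpq : p < q)
    (hne : ¬(p = (⟨k, by omega⟩ : Fin t) ∧ q = ⟨k + 1, hk⟩)) :
    Equiv.swap (⟨k, by omega⟩ : Fin t) ⟨k + 1, hk⟩ p
      < Equiv.swap (⟨k, by omega⟩ : Fin t) ⟨k + 1, hk⟩ q := by
  obtain ⟨pv, hp⟩ := p; obtain ⟨qv, hq⟩ := q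
  simp only [Equiv.swap_apply_def]
  split_ifs <;> simp only [Fin.ext_iff, Fin.lt_def, Fin.mk.injEq, not_and] at * <;> omega

lemma inversions_one {t : ℕ} : inversions (1 : Equiv.Perm (Fin t)) = 0 := by
  unfold inversions
  rw [Finset.card_eq_zero, Finset.filter_eq_empty_iff]
  intro p _
  simp only [Equiv.Perm.one_apply]
  rintro ⟨h1, h2⟩
  exact absurd h2 h1.asymm

lemma strictMono_eq_one {t : ℕ} (σ : Equiv.Perm (Fin t)) (h : StrictMono σ) : σ = 1 := by
  have inst : WellFoundedLT (Fin t) := inferInstance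
  have := (StrictMono.range_inj (β := Fin t) (γ := Fin t) h
    (strictMono_id (α := Fin t))).1 (by rw [Set.range_id, σ.surjective.range_eq])
  ext i
  simp [congrFun this i]

lemma inversions_mul_swap {t : ℕ} (σ : Equiv.Perm (Fin t)) (k : ℕ) (hk : k + 1 < t)
    (hd : σ ⟨k + 1, hk⟩ < σ ⟨k, by omega⟩) :
    inversions (σ * Equiv.swap ⟨k, by omega⟩ ⟨k + 1, hk⟩) + 1 = inversions σ := by
  set u : Fin t := ⟨k, by omega⟩ with hu
  set v : Fin t := ⟨k + 1, hk⟩ with hv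
  set s := Equiv.swap u v with hs
  have hss : ∀ x : Fin t, s (s x) = x := fun x => Equiv.swap_apply_self u v x
  have hsu : s u = v := Equiv.swap_apply_left u v
  have hsv : s v = u := Equiv.swap_apply_right u v
  have huv : u < v := by simp [hu, hv, Fin.lt_def]
  have hcard : inversions (σ * s)
      = ((Finset.univ.filter fun p : Fin t × Fin t =>
          p.1 < p.2 ∧ σ p.2 < σ p.1).erase (u, v)).card := by
    apply Finset.card_bij' (fun p _ => (s p.1, s p.2)) (fun p _ => (s p.1, s p.2))
    · intro p hp
      simp only [Finset.mem_filter, Finset.mem_univ, true_and] at hp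
      simp only [Equiv.Perm.mul_apply] at hp
      obtain ⟨h1, h2⟩ := hp
      have hpne : ¬(p.1 = u ∧ p.2 = v) := by
        rintro ⟨e1, e2⟩
        rw [e1, e2, hsu, hsv] at h2
        exact absurd hd (not_lt.2 h2.le)
      refine Finset.mem_erase.2 ⟨?_, ?_⟩
      · intro hcon
        have e1 : s p.1 = u := by rw [Prod.ext_iff] at hcon; exact hcon.1
        have e2 : s p.2 = v := by rw [Prod.ext_iff] at hcon; exact hcon.2
        have hv1 : p.1 = v := by rw [← hss p.1, e1, hsu]
        have hv2 : p.2 = u := by rw [← hss p.2, e2, hsv]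
        rw [hv1, hv2] at h1
        exact absurd h1 (not_lt.2 huv.le)
      · simp only [Finset.mem_filter, Finset.mem_univ, true_and]
        exact ⟨swap_adj_lt hk h1 hpne, h2⟩
    · intro q hq
      rw [Finset.mem_erase] at hq
      obtain ⟨hne, hq⟩ := hq
      simp only [Finset.mem_filter, Finset.mem_univ, true_and] at hq
      obtain ⟨h1, h2⟩ := hq
      have hqne : ¬(q.1 = u ∧ q.2 = v) := by
        rintro ⟨e1, e2⟩
        exact hne (Prod.ext e1 e2)
      simp only [Finset.mem_filter, Finset.mem_univ, true_and]
      simp only [Equiv.Perm.mul_apply]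
      rw [hss, hss]
      exact ⟨swap_adj_lt hk h1 hqne, h2⟩
    · intro p _; simp [hss]
    · intro p _; simp [hss]
  have hmem : (u, v) ∈ (Finset.univ.filter fun p : Fin t × Fin t =>
      p.1 < p.2 ∧ σ p.2 < σ p.1) := by
    simp only [Finset.mem_filter, Finset.mem_univ, true_and]
    exact ⟨huv, hd⟩
  rw [hcard, Finset.card_erase_of_mem hmem]
  have : 0 < (Finset.univ.filter fun p : Fin t × Fin t =>
      p.1 < p.2 ∧ σ p.2 < σ p.1).card := Finset.card_pos.2 ⟨(u, v), hmem⟩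
  unfold inversions
  omega

lemma inversions_inv {t : ℕ} (σ : Equiv.Perm (Fin t)) : inversions σ⁻¹ = inversions σ := by
  apply Finset.card_bij' (fun p _ => (σ⁻¹ p.2, σ⁻¹ p.1)) (fun p _ => (σ p.2, σ p.1))
  · intro p hp
    simp only [Finset.mem_filter, Finset.mem_univ, true_and] at *
    exact ⟨hp.2, by simpa using hp.1⟩
  · intro q hq
    simp only [Finset.mem_filter, Finset.mem_univ, true_and] at *
    exact ⟨hq.2, by simpa using hq.1⟩
  · intro p _; simp
  · intro p _; simp

lemma listProd_swap : ∀ (t k : ℕ) (hk : k + 1 < t) (f g : Fin t → R) (c : F),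
    (∀ i : Fin t, i.1 ≠ k → i.1 ≠ k + 1 → f i = g i) →
    f ⟨k, by omega⟩ * f ⟨k + 1, hk⟩ = c • (g ⟨k, by omega⟩ * g ⟨k + 1, hk⟩) →
    (List.ofFn f).prod = c • (List.ofFn g).prod := by
  intro t k
  induction k generalizing t with
  | zero =>
    intro hk f g c h1 h2
    obtain ⟨m, rfl⟩ : ∃ m, t = m + 2 := ⟨t - 2, by omega⟩
    rw [List.ofFn_succ, List.ofFn_succ, List.ofFn_succ, List.ofFn_succ,
      List.prod_cons, List.prod_cons, List.prod_cons, List.prod_cons]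
    have hrest : (List.ofFn fun i : Fin m => f i.succ.succ).prod
        = (List.ofFn fun i : Fin m => g i.succ.succ).prod := by
      have he : (fun i : Fin m => f i.succ.succ) = fun i : Fin m => g i.succ.succ :=
        funext fun i => h1 _ (by simp [Fin.val_succ]) (by simp [Fin.val_succ])
      rw [he]
    rw [← mul_assoc, ← mul_assoc, hrest]
    have e2 : f (0 : Fin (m+2)) * f ((0 : Fin (m+1)).succ)
        = c • (g (0 : Fin (m+2)) * g ((0 : Fin (m+1)).succ)) := by
      convert h2 using 3 <;> rfl
    rw [e2, smul_mul_assoc]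
  | succ k ih =>
    intro hk f g c h1 h2
    obtain ⟨m, rfl⟩ : ∃ m, t = m + 1 := ⟨t - 1, by omega⟩
    rw [List.ofFn_succ, List.ofFn_succ, List.prod_cons, List.prod_cons]
    have h0 : f 0 = g 0 := h1 0 (by simp) (by simp)
    have hrec : (List.ofFn fun i : Fin m => f i.succ).prod
        = c • (List.ofFn fun i : Fin m => g i.succ).prod := by
      apply ih m (by omega) _ _ c
      · intro i hi1 hi2
        exact h1 i.succ (by simp only [Fin.val_succ]; omega)
          (by simp only [Fin.val_succ]; omega)
      · convert h2 using 3 <;> rfl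
    rw [hrec, h0, mul_smul_comm]
end Aux

section Main
variable {F : Type*} [Field F] {R : Type*} [Ring R] [Algebra F R]

lemma sort_prod (r s : F) (hr : r ≠ 0) {n : ℕ} (a : Fin n → Fin n → R)
    (rel3 : ∀ i j k l : Fin n, i < j → k < l → r • (a i l * a j k) = s⁻¹ • (a j k * a i l))
    {t : ℕ} (I J : Fin t → Fin n) (hI : StrictMono I) (hJ : StrictMono J) :
    ∀ (m : ℕ) (π ρ : Equiv.Perm (Fin t)), inversions ρ = m →
    (∀ p q : Fin t, p < q → ρ q < ρ p → π p < π q) →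
    (List.ofFn fun i => a (I (π i)) (J (ρ i))).prod
      = ((r * s)⁻¹ : F) ^ m • (List.ofFn fun i => a (I (π (ρ⁻¹ i))) (J i)).prod := by
  intro m
  induction m with
  | zero =>
    intro π ρ hinv _
    have hmono : StrictMono ρ := by
      intro p q hpq
      rcases lt_trichotomy (ρ p) (ρ q) with h | h | h
      · exact h
      · exact absurd (ρ.injective h) hpq.ne
      · exfalso
        have hmem : (p, q) ∈ Finset.univ.filter
            (fun x : Fin t × Fin t => x.1 < x.2 ∧ ρ x.2 < ρ x.1) := by
          simp [hpq, h]
        unfold inversions at hinv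
        rw [Finset.card_eq_zero.1 hinv] at hmem
        simpa using hmem
    have hρ : ρ = 1 := strictMono_eq_one ρ hmono
    subst hρ
    simp
  | succ m ih =>
    intro π ρ hinv hcompat
    have hdesc : ∃ k, ∃ hk : k + 1 < t, ρ ⟨k + 1, hk⟩ < ρ ⟨k, by omega⟩ := by
      by_contra hcon
      push_neg at hcon
      have hmono : StrictMono ρ := by
        cases t with
        | zero => exact fun p => p.elim0
        | succ t' =>
          rw [Fin.strictMono_iff_lt_succ]
          intro i
          have hle := hcon i.1 (by omega)
          have hne : ρ (Fin.castSucc i) ≠ ρ i.succ :=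
            fun h => by simpa [Fin.ext_iff] using ρ.injective h
          have e1 : (⟨i.1, by omega⟩ : Fin (t' + 1)) = Fin.castSucc i := by
            simp [Fin.ext_iff]
          have e2 : (⟨i.1 + 1, by omega⟩ : Fin (t' + 1)) = i.succ := by
            simp [Fin.ext_iff]
          rw [e1, e2] at hle
          exact lt_of_le_of_ne hle hne
      rw [strictMono_eq_one ρ hmono, inversions_one] at hinv
      exact Nat.succ_ne_zero m hinv.symm
    obtain ⟨k, hk, hd⟩ := hdesc
    set u : Fin t := ⟨k, by omega⟩ with hu
    set v : Fin t := ⟨k + 1, hk⟩ with hv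
    set w := Equiv.swap u v with hw
    have hss : ∀ x : Fin t, w (w x) = x := fun x => Equiv.swap_apply_self u v x
    have hwu : w u = v := Equiv.swap_apply_left u v
    have hwv : w v = u := Equiv.swap_apply_right u v
    have huv : u < v := by simp [hu, hv, Fin.lt_def]
    set π' := π * w with hπ'
    set ρ' := ρ * w with hρ'
    -- the swap step
    have hπuv : π u < π v := hcompat u v huv hd
    have hstep : (List.ofFn fun i => a (I (π i)) (J (ρ i))).prod
        = ((r * s)⁻¹ : F) • (List.ofFn fun i => a (I (π' i)) (J (ρ' i))).prod := by
      apply listProd_swap t k hk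
      · intro i hi1 hi2
        have hiw : w i = i := by
          apply Equiv.swap_apply_of_ne_of_ne
          · simp [hu, Fin.ext_iff]; omega
          · simp [hv, Fin.ext_iff]; omega
        simp only [hπ', hρ', Equiv.Perm.mul_apply, hiw]
      · have h3 := rel3 (I (π u)) (I (π v)) (J (ρ v)) (J (ρ u)) (hI hπuv) (hJ hd)
        have := congrArg (fun x => (r⁻¹ : F) • x) h3
        simp only [smul_smul, inv_mul_cancel₀ hr, one_smul] at this
        have e : (⟨k, by omega⟩ : Fin t) = u := rfl
        have e' : (⟨k + 1, hk⟩ : Fin t) = v := rfl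
        rw [e, e']
        simp only [hπ', hρ', Equiv.Perm.mul_apply, hwu, hwv]
        rw [this, ← mul_inv]
    have hinv' : inversions ρ' = m := by
      have h2 := inversions_mul_swap ρ k hk hd
      rw [hinv] at h2
      have e : ρ * Equiv.swap (⟨k, by omega⟩ : Fin t) ⟨k + 1, hk⟩ = ρ' := rfl
      rw [e] at h2
      omega
    have hcompat' : ∀ p q : Fin t, p < q → ρ' q < ρ' p → π' p < π' q := by
      intro p q hpq hlt
      simp only [hρ', hπ', Equiv.Perm.mul_apply] at *
      by_cases hcase : p = u ∧ q = v
      · obtain ⟨rfl, rfl⟩ := hcase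
        rw [hwu, hwv] at hlt
        exact absurd hlt hd.asymm
      · exact hcompat _ _ (swap_adj_lt hk hpq hcase) hlt
    have hrec := ih π' ρ' hinv' hcompat'
    have hfix : ∀ i : Fin t, π' (ρ'⁻¹ i) = π (ρ⁻¹ i) := by
      intro i
      simp only [hπ', hρ', mul_inv_rev, Equiv.Perm.mul_apply]
      rw [show w⁻¹ = w from (Equiv.swap_inv u v) ▸ rfl]
      rw [hss]
    have hlist : (List.ofFn fun i => a (I (π' (ρ'⁻¹ i))) (J i))
        = (List.ofFn fun i => a (I (π (ρ⁻¹ i))) (J i)) := by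
      congr 1
      funext i
      rw [hfix]
    rw [hstep, hrec, hlist, smul_smul, ← pow_succ']

theorem minor_rdet_eq_cdet' (r s : F) (hr : r ≠ 0) (hs : s ≠ 0)
    {n : ℕ} (a : Fin n → Fin n → R)
    (ha : IsQSemigroup r s a) (t : ℕ) (I J : Fin t → Fin n)
    (hI : StrictMono I) (hJ : StrictMono J) :
    rdet r (fun p q => a (I p) (J q)) = cdet s (fun p q => a (I p) (J q)) := by
  obtain ⟨-, -, rel3, -⟩ := ha
  unfold rdet cdet
  have key : ∀ σ : Equiv.Perm (Fin t),
      (List.ofFn fun i => a (I i) (J (σ i))).prod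
        = ((r * s)⁻¹ : F) ^ inversions σ • (List.ofFn fun i => a (I (σ⁻¹ i)) (J i)).prod := by
    intro σ
    have := sort_prod r s hr a rel3 I J hI hJ (inversions σ) 1 σ rfl
      (fun p q hpq _ => hpq)
    simpa using this
  calc (∑ σ : Equiv.Perm (Fin t),
        (-r) ^ inversions σ • (List.ofFn fun i => a (I i) (J (σ i))).prod)
      = ∑ σ : Equiv.Perm (Fin t),
        ((-s) ^ (-(inversions σ : ℤ))) • (List.ofFn fun i => a (I (σ⁻¹ i)) (J i)).prod := by
        apply Finset.sum_congr rfl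
        intro σ _
        rw [key σ, smul_smul, ← mul_pow]
        have hsc : ((-r) * (r * s)⁻¹ : F) ^ inversions σ
            = (-s : F) ^ (-(inversions σ : ℤ)) := by
          rw [zpow_neg, zpow_natCast, ← inv_pow]
          congr 1
          rw [mul_inv]
          field_simp
        rw [hsc]
    _ = _ := by
        apply Fintype.sum_equiv (Equiv.inv (Equiv.Perm (Fin t)))
        intro σ
        simp only [Equiv.inv_apply]
        rw [inversions_inv]

end Main



/-- In `𝒜_{r,s}(n)`, for increasing row indices `i_1 < ⋯ < i_t` and
column indices `j_1 < ⋯ < j_t`, the quantum row-minor equals the quantum column-minor. -/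
theorem minor_rdet_eq_cdet {F : Type*} [Field F] (r s : F) (hr : r ≠ 0) (hs : s ≠ 0)
    {R : Type*} [Ring R] [Algebra F R] {n : ℕ} (a : Fin n → Fin n → R)
    (ha : IsQSemigroup r s a) (t : ℕ) (I J : Fin t → Fin n)
    (hI : StrictMono I) (hJ : StrictMono J) :
    rdet r (fun p q => a (I p) (J q)) = cdet s (fun p q => a (I p) (J q)) :=
  minor_rdet_eq_cdet' r s hr hs a ha t I J hI hJ
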